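/- If an m-output sign-constrained single-hidden-layer rectifier network (each output f_k(x) = ⟨a_k, max(0, Wᵀx + b)⟩ + c_k with a_k ⪯ 0) separates finite sets X₁, ..., X_m (f_k > 0 on X_k and f_k < 0 on the other sets), then CH(X_i) ∩ X_j = ∅ for all i ≠ j. -/

import Mathlib

/-- If an `m`-output sign-constrained single-hidden-layer rectifier network separates finite
sets `X 1, ..., X m` (output `k` positive on `X k`, negative on the others), then the sets
are pairwise mutually convexly separable. -/
theorem multiclass_scrn_separator_necessity (n m l : ℕ) (X : Fin m → Set (Fin n → ℝ))
    (hfin : ∀ k, (X k).Finite)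
    (W : Fin l → Fin n → ℝ) (b : Fin l → ℝ) (a : Fin m → Fin l → ℝ) (c : Fin m → ℝ)
    (ha : ∀ k i, a k i ≤ 0)
    (hpos : ∀ k, ∀ x ∈ X k,
      0 < (∑ i, a k i * max 0 ((∑ j, W i j * x j) + b i)) + c k)
    (hneg : ∀ k k', k' ≠ k → ∀ x ∈ X k',
      (∑ i, a k i * max 0 ((∑ j, W i j * x j) + b i)) + c k < 0) :
    ∀ i j, i ≠ j → Disjoint (convexHull ℝ (X i)) (X j) := by
  -- each hidden unit is a convex function
  have hconv : ∀ i : Fin l, ConvexOn ℝ (Set.univ : Set (Fin n → ℝ))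
      (fun x => max 0 ((∑ j, W i j * x j) + b i)) := by
    intro i
    have haff : ConvexOn ℝ (Set.univ : Set (Fin n → ℝ))
        (fun x => (∑ j, W i j * x j) + b i) := by
      refine ⟨convex_univ, fun x _ y _ p q hp hq hpq => le_of_eq ?_⟩
      simp only [Pi.add_apply, Pi.smul_apply, smul_eq_mul]
      have : (∑ j, W i j * (p * x j + q * y j))
          = p * (∑ j, W i j * x j) + q * (∑ j, W i j * y j) := by
        rw [Finset.mul_sum, Finset.mul_sum, ← Finset.sum_add_distrib]
        exact Finset.sum_congr rfl fun j _ => by ring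
      rw [this]
      linear_combination (-(b i)) * hpq
    have h0 : ConvexOn ℝ (Set.univ : Set (Fin n → ℝ)) (fun _ => (0 : ℝ)) :=
      convexOn_const 0 convex_univ
    have := h0.sup haff
    exact this
  have hterm : ∀ (k : Fin m) (i : Fin l), ConcaveOn ℝ (Set.univ : Set (Fin n → ℝ))
      (fun x => a k i * max 0 ((∑ j, W i j * x j) + b i)) := by
    intro k i
    have h1 : ConvexOn ℝ (Set.univ : Set (Fin n → ℝ))
        (fun x => (-(a k i)) • max 0 ((∑ j, W i j * x j) + b i)) :=
      (hconv i).smul (by linarith [ha k i])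
    have h2 := h1.neg
    have heq : (fun x : Fin n → ℝ => a k i * max 0 ((∑ j, W i j * x j) + b i))
        = -(fun x : Fin n → ℝ => (-(a k i)) • max 0 ((∑ j, W i j * x j) + b i)) := by
      funext x
      simp only [Pi.neg_apply, smul_eq_mul, neg_mul, neg_neg]
    rw [heq]
    exact h2
  have hconc : ∀ k : Fin m, ConcaveOn ℝ (Set.univ : Set (Fin n → ℝ))
      (fun x => (∑ i, a k i * max 0 ((∑ j, W i j * x j) + b i)) + c k) := by
    intro k
    have hsum : ∀ s : Finset (Fin l), ConcaveOn ℝ (Set.univ : Set (Fin n → ℝ))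
        (fun x => ∑ i ∈ s, a k i * max 0 ((∑ j, W i j * x j) + b i)) := by
      intro s
      induction s using Finset.induction with
      | empty => simpa using concaveOn_const (0 : ℝ) (convex_univ)
      | insert _ _ h ih =>
        simp only [Finset.sum_insert h]
        exact (hterm k _).add ih
    exact (hsum Finset.univ).add_const (c k)
  intro i j hij
  rw [Set.disjoint_left]
  intro x hx hxj
  obtain ⟨y, hy, hle⟩ := (hconc i).exists_le_of_mem_convexHull (Set.subset_univ _) hx
  have h1 := hpos i y hy
  have h2 := hneg i j hij.symm x hxj
  linarith
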